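/- Let K ⊆ L be an extension of fields and let T = K + X·L[X]. Then T is a Noetherian ring if and only if the field extension K ⊆ L is finite, i.e. [L : K] < ∞. -/

import Mathlib

/-- The polynomial composite `A + X·B[X]`: the subring of `B[X]` of polynomials
whose constant coefficient lies in `A`. -/
def Subring.composite {B : Type*} [CommRing B] (A : Subring B) : Subring (Polynomial B) where
  carrier := {f : Polynomial B | f.coeff 0 ∈ A}
  mul_mem' {f g} hf hg := by
    simp only [Set.mem_setOf_eq, Polynomial.mul_coeff_zero] at *
    exact mul_mem hf hg
  one_mem' := by
    simp only [Set.mem_setOf_eq, Polynomial.coeff_one_zero]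
    exact one_mem A
  add_mem' {f g} hf hg := by
    simp only [Set.mem_setOf_eq, Polynomial.coeff_add] at *
    exact add_mem hf hg
  zero_mem' := by
    simp only [Set.mem_setOf_eq, Polynomial.coeff_zero]
    exact zero_mem A
  neg_mem' {f} hf := by
    simp only [Set.mem_setOf_eq, Polynomial.coeff_neg] at *
    exact neg_mem hf

theorem Subring.mem_composite {B : Type*} [CommRing B] (A : Subring B) (f : Polynomial B) :
    f ∈ A.composite ↔ f.coeff 0 ∈ A := Iff.rfl

/-- For an extension of fields `K ⊆ L`, the composite `T = K + X·L[X]` is Noetherian iff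
the extension `K ⊆ L` is finite. -/
theorem composite_isNoetherianRing_iff (K L : Type*) [Field K] [Field L] [Algebra K L] :
    IsNoetherianRing ((algebraMap K L).range.composite) ↔ Module.Finite K L := by
  classical
  set T := (algebraMap K L).range.composite with hTdef
  constructor
  · intro hN
    -- the ideal of `T` of polynomials with zero constant coefficient
    let φ : T →+* L := Polynomial.constantCoeff.comp T.subtype
    let I : Ideal T := RingHom.ker φ
    obtain ⟨s, hs⟩ := (isNoetherianRing_iff_ideal_fg _).mp hN I
    rw [Module.finite_def]
    refine ⟨s.image (fun f : T => (f : Polynomial L).coeff 1), ?_⟩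
    rw [Submodule.eq_top_iff']
    intro b
    have hp : (Polynomial.C b * Polynomial.X) ∈ T := by
      rw [hTdef, Subring.mem_composite]
      simp
    have hI : (⟨_, hp⟩ : T) ∈ I := by
      simp [I, φ, RingHom.mem_ker]
    rw [← hs, Ideal.span, Submodule.mem_span_finset] at hI
    obtain ⟨f, -, hf⟩ := hI
    have hcoeff : ∀ g ∈ s, (g : Polynomial L).coeff 0 = 0 := by
      intro g hg
      have : g ∈ I := hs ▸ Ideal.subset_span hg
      simpa [I, φ, RingHom.mem_ker] using this
    have hb : b = ∑ g ∈ s, ((f g : Polynomial L).coeff 0) * (g : Polynomial L).coeff 1 := by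
      have hthis : ((∑ i ∈ s, f i • i : T) : Polynomial L).coeff 1 = b := by
        rw [hf]; simp
      rw [← hthis]
      push_cast
      rw [Polynomial.finset_sum_coeff]
      refine Finset.sum_congr rfl fun g hg => ?_
      rw [smul_eq_mul]
      push_cast
      rw [Polynomial.mul_coeff_one, hcoeff g hg, mul_zero, add_zero]
    rw [hb]
    refine Submodule.sum_mem _ fun g hg => ?_
    obtain ⟨k, hk⟩ := (f g).2
    rw [← hk, ← Algebra.smul_def]
    exact Submodule.smul_mem _ _ (Submodule.subset_span
      (Finset.mem_coe.mpr (Finset.mem_image_of_mem _ hg)))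
  · intro hF
    obtain ⟨s, hspan⟩ := Module.finite_def.mp hF
    let A : Subalgebra K (Polynomial L) :=
      Algebra.adjoin K ((fun b => Polynomial.C b * Polynomial.X) '' ↑s)
    have key1 : ∀ a : L, Polynomial.C a * Polynomial.X ∈ A := by
      intro a
      have ha : a ∈ Submodule.span K (↑s : Set L) := by rw [hspan]; trivial
      induction ha using Submodule.span_induction with
      | mem x hx => exact Algebra.subset_adjoin ⟨x, hx, rfl⟩
      | zero => simpa using A.zero_mem
      | add x y _ _ hx hy => rw [Polynomial.C_add, add_mul]; exact A.add_mem hx hy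
      | smul k x _ hx =>
          have : Polynomial.C (k • x) * Polynomial.X
              = k • (Polynomial.C x * Polynomial.X) := by
            rw [Algebra.smul_def, Algebra.smul_def, map_mul]
            simp [Polynomial.algebraMap_apply, mul_assoc]
          rw [this]
          exact A.smul_mem hx k
    have hX : (Polynomial.X : Polynomial L) ∈ A := by
      simpa using key1 1
    have key2 : ∀ (n : ℕ) (a : L), Polynomial.C a * Polynomial.X ^ (n + 1) ∈ A := by
      intro n
      induction n with
      | zero => intro a; simpa using key1 a
      | succ n ih =>
          intro a
          have : Polynomial.C a * Polynomial.X ^ (n + 2)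
              = (Polynomial.C a * Polynomial.X ^ (n + 1)) * Polynomial.X := by ring
          rw [this]
          exact A.mul_mem (ih a) hX
    have keyX : ∀ q : Polynomial L, Polynomial.X * q ∈ A := by
      intro q
      induction q using Polynomial.induction_on' with
      | add p q hp hq => rw [mul_add]; exact A.add_mem hp hq
      | monomial n a =>
          have : Polynomial.X * Polynomial.monomial n a
              = Polynomial.C a * Polynomial.X ^ (n + 1) := by
            rw [← Polynomial.C_mul_X_pow_eq_monomial]; ring
          rw [this]
          exact key2 n a
    have hAT : A.toSubring = T := by
      apply le_antisymm
      · intro x hx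
        rw [Subalgebra.mem_toSubring] at hx
        induction hx using Algebra.adjoin_induction with
        | mem x hx =>
            obtain ⟨b, _, rfl⟩ := hx
            rw [hTdef, Subring.mem_composite]
            simp
        | algebraMap k =>
            rw [hTdef, Subring.mem_composite]
            simp [Polynomial.algebraMap_apply]
        | add x y _ _ hx hy => exact T.add_mem hx hy
        | mul x y _ _ hx hy => exact T.mul_mem hx hy
      · intro g hg
        rw [hTdef, Subring.mem_composite] at hg
        rw [Subalgebra.mem_toSubring]
        obtain ⟨k, hk⟩ := hg
        have h1 : Polynomial.C (g.coeff 0) ∈ A := by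
          rw [← hk, ← Polynomial.algebraMap_apply]
          exact A.algebraMap_mem k
        have h2 : g - Polynomial.C (g.coeff 0) ∈ A := by
          obtain ⟨q, hq⟩ := Polynomial.X_dvd_iff.mpr
            (show (g - Polynomial.C (g.coeff 0)).coeff 0 = 0 by simp)
          rw [hq]
          exact keyX q
        have : g = Polynomial.C (g.coeff 0) + (g - Polynomial.C (g.coeff 0)) := by ring
        rw [this]
        exact A.add_mem h1 h2
    have hfg : A.FG := ⟨s.image (fun b => Polynomial.C b * Polynomial.X), by
      rw [Finset.coe_image]⟩
    have hNA : IsNoetherianRing A := isNoetherianRing_of_fg hfg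
    have hNA' : IsNoetherianRing A.toSubring := hNA
    exact isNoetherianRing_of_ringEquiv _ (RingEquiv.subringCongr hAT)
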